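/- arXiv:1510.00052 — 2 statements merged into one kernel-verified Lean document; each statement's English description precedes it below -/
import Mathlib

section
/- Inverse inequalities for rotated-Q1 IFE functions, uniform in the interface location (reference-element form, h = 1): there exists a constant C > 0 depending only on β⁻ and β⁺ such that for all d, e ∈ (0,1) and all coefficient vectors (c⁻, c⁺) satisfying the jump conditions (J1)–(J3), the associated piecewise rotated-Q1 function φ satisfies, for all integers 0 ≤ l ≤ k ≤ 2: (i) |φ|_{k,∞,T} ≤ C |φ|_{k,T}, and (ii) |φ|_{k,T} ≤ C |φ|_{l,T}, where |φ|_{k,T}² = Σ_{|α| = k} ( ∫_{T⁻} |∂^α p⁻|² dx dy + ∫_{T⁺} |∂^α p⁺|² dx dy ) and |φ|_{k,∞,T} = max over s = ± and multi-indices |α| = k of sup_{(x,y) ∈ Tˢ} |∂^α pˢ(x,y)|. -/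
open MeasureTheory Set

noncomputable section

/-- The rotated-Q1 polynomial `c₁ + c₂ x + c₃ y + c₄ (x² − y²)` with coefficient
vector `c = (c 0, c 1, c 2, c 3)`. -/
def rq1 (c : Fin 4 → ℝ) (x y : ℝ) : ℝ :=
  c 0 + c 1 * x + c 2 * y + c 3 * (x ^ 2 - y ^ 2)

/-- The piecewise rotated-Q1 function on the reference Type II interface element:
`p⁻` where `x ≤ d + (e − d) y`, `p⁺` elsewhere. -/
def phiFn (d e : ℝ) (cm cp : Fin 4 → ℝ) (x y : ℝ) : ℝ :=
  if x ≤ d + (e - d) * y then rq1 cm x y else rq1 cp x y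

/-- Jump condition (J1): continuity at the interface points `D = (d,0)` and `E = (e,1)`. -/
def J1 (d e : ℝ) (cm cp : Fin 4 → ℝ) : Prop :=
  rq1 cm d 0 = rq1 cp d 0 ∧ rq1 cm e 1 = rq1 cp e 1

/-- Jump condition (J2): matching of the `x² − y²` coefficients. -/
def J2 (cm cp : Fin 4 → ℝ) : Prop := cm 3 = cp 3

/-- The flux defect `∫₀¹ (β⁺∇p⁺ − β⁻∇p⁻)((1−t)d + te, t) · (1, d − e) dt`. -/
def fluxDefect (βm βp d e : ℝ) (cm cp : Fin 4 → ℝ) : ℝ :=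
  ∫ t in (0:ℝ)..1,
    ((βp * (cp 1 + 2 * cp 3 * ((1 - t) * d + t * e))
        - βm * (cm 1 + 2 * cm 3 * ((1 - t) * d + t * e))) * 1
      + (βp * (cp 2 - 2 * cp 3 * t) - βm * (cm 2 - 2 * cm 3 * t)) * (d - e))

/-- Jump condition (J3): the integral over `DE` of the jump of the normal flux vanishes. -/
def J3 (βm βp d e : ℝ) (cm cp : Fin 4 → ℝ) : Prop :=
  fluxDefect βm βp d e cm cp = 0

/-- The four edge-mean (integral-value) degrees of freedom of `φ`:
bottom, right, top, left edges of `T = [0,1]²`. -/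
def dofI (d e : ℝ) (cm cp : Fin 4 → ℝ) : Fin 4 → ℝ :=
  ![(∫ x in (0:ℝ)..d, rq1 cm x 0) + ∫ x in d..(1:ℝ), rq1 cp x 0,
    ∫ y in (0:ℝ)..1, rq1 cp 1 y,
    (∫ x in (0:ℝ)..e, rq1 cm x 1) + ∫ x in e..(1:ℝ), rq1 cp x 1,
    ∫ y in (0:ℝ)..1, rq1 cm 0 y]

/-- The four midpoint-value degrees of freedom of `φ`:
values at the midpoints of the bottom, right, top, left edges of `T = [0,1]²`. -/
def dofP (d e : ℝ) (cm cp : Fin 4 → ℝ) : Fin 4 → ℝ :=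
  ![phiFn d e cm cp (1/2) 0, phiFn d e cm cp 1 (1/2),
    phiFn d e cm cp (1/2) 1, phiFn d e cm cp 0 (1/2)]

/-- The partial derivative `∂ₓᵃ∂ᵧᵇ` of the rotated-Q1 polynomial with coefficients `c`. -/
def rq1D (c : Fin 4 → ℝ) : ℕ → ℕ → ℝ → ℝ → ℝ
  | 0, 0, x, y => rq1 c x y
  | 1, 0, x, _ => c 1 + 2 * c 3 * x
  | 0, 1, _, y => c 2 - 2 * c 3 * y
  | 2, 0, _, _ => 2 * c 3
  | 1, 1, _, _ => 0
  | 0, 2, _, _ => -(2 * c 3)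
  | _, _, _, _ => 0

/-- Integral of `f` over the subelement `T⁻ = {(x,y) ∈ T : x < d + (e−d)y}`. -/
def intTm (d e : ℝ) (f : ℝ → ℝ → ℝ) : ℝ :=
  ∫ y in (0:ℝ)..1, ∫ x in (0:ℝ)..(d + (e - d) * y), f x y

/-- Integral of `f` over the subelement `T⁺ = {(x,y) ∈ T : x > d + (e−d)y}`. -/
def intTp (d e : ℝ) (f : ℝ → ℝ → ℝ) : ℝ :=
  ∫ y in (0:ℝ)..1, ∫ x in (d + (e - d) * y)..(1:ℝ), f x y

/-- The squared broken Sobolev seminorm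
`|φ|²_{k,T} = Σ_{|α|=k} (∫_{T⁻}|∂^α p⁻|² + ∫_{T⁺}|∂^α p⁺|²)`, `k = 0, 1, 2`. -/
def semiSq (d e : ℝ) (cm cp : Fin 4 → ℝ) : ℕ → ℝ
  | 0 => intTm d e (fun x y => (rq1D cm 0 0 x y) ^ 2) +
      intTp d e (fun x y => (rq1D cp 0 0 x y) ^ 2)
  | 1 => (intTm d e (fun x y => (rq1D cm 1 0 x y) ^ 2) +
        intTp d e (fun x y => (rq1D cp 1 0 x y) ^ 2)) +
      (intTm d e (fun x y => (rq1D cm 0 1 x y) ^ 2) +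
        intTp d e (fun x y => (rq1D cp 0 1 x y) ^ 2))
  | 2 => (intTm d e (fun x y => (rq1D cm 2 0 x y) ^ 2) +
        intTp d e (fun x y => (rq1D cp 2 0 x y) ^ 2)) +
      (intTm d e (fun x y => (rq1D cm 1 1 x y) ^ 2) +
        intTp d e (fun x y => (rq1D cp 1 1 x y) ^ 2)) +
      (intTm d e (fun x y => (rq1D cm 0 2 x y) ^ 2) +
        intTp d e (fun x y => (rq1D cp 0 2 x y) ^ 2))
  | _ => 0

lemma hasDerivAt_poly5 (c0 c1 c2 c3 c4 c5 x : ℝ) :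
    HasDerivAt (fun t : ℝ => c0*t + c1*t^2/2 + c2*t^3/3 + c3*t^4/4 + c4*t^5/5 + c5*t^6/6)
      (c0 + c1*x + c2*x^2 + c3*x^3 + c4*x^4 + c5*x^5) x := by
  have H := (((((((hasDerivAt_id x).const_mul c0).add
      (((hasDerivAt_pow 2 x).const_mul c1).div_const 2)).add
      (((hasDerivAt_pow 3 x).const_mul c2).div_const 3)).add
      (((hasDerivAt_pow 4 x).const_mul c3).div_const 4)).add
      (((hasDerivAt_pow 5 x).const_mul c4).div_const 5)).add
      (((hasDerivAt_pow 6 x).const_mul c5).div_const 6))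
  convert H using 1
  · rfl
  · rfl
  · rfl
  · norm_num
    ring

lemma ipoly {f : ℝ → ℝ} (c0 c1 c2 c3 c4 c5 a b : ℝ)
    (hf : ∀ x, f x = c0 + c1*x + c2*x^2 + c3*x^3 + c4*x^4 + c5*x^5) :
    ∫ x in a..b, f x = (c0*b + c1*b^2/2 + c2*b^3/3 + c3*b^4/4 + c4*b^5/5 + c5*b^6/6)
      - (c0*a + c1*a^2/2 + c2*a^3/3 + c3*a^4/4 + c4*a^5/5 + c5*a^6/6) := by
  rw [funext hf]
  exact intervalIntegral.integral_eq_sub_of_hasDerivAt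
    (fun x _ => hasDerivAt_poly5 c0 c1 c2 c3 c4 c5 x)
    ((by fun_prop : Continuous fun x : ℝ => c0 + c1*x + c2*x^2 + c3*x^3 + c4*x^4 + c5*x^5).intervalIntegrable a b)

lemma intTm_nonneg (d e : ℝ) (hd : d ∈ Icc (0:ℝ) 1) (he : e ∈ Icc (0:ℝ) 1)
    (f : ℝ → ℝ → ℝ) (hf : ∀ x y, 0 ≤ f x y) : 0 ≤ intTm d e f := by
  apply intervalIntegral.integral_nonneg (by norm_num)
  intro y hy
  apply intervalIntegral.integral_nonneg
  · nlinarith [hd.1, hd.2, he.1, he.2, hy.1, hy.2]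
  · exact fun x _ => hf x y

lemma intTp_nonneg (d e : ℝ) (hd : d ∈ Icc (0:ℝ) 1) (he : e ∈ Icc (0:ℝ) 1)
    (f : ℝ → ℝ → ℝ) (hf : ∀ x y, 0 ≤ f x y) : 0 ≤ intTp d e f := by
  apply intervalIntegral.integral_nonneg (by norm_num)
  intro y hy
  apply intervalIntegral.integral_nonneg
  · nlinarith [hd.1, hd.2, he.1, he.2, hy.1, hy.2]
  · exact fun x _ => hf x y

lemma intTm_ge_tri (d e : ℝ) (hd : 1/2 ≤ d) (hd1 : d ≤ 1) (he : e ∈ Icc (0:ℝ) 1)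
    (f : ℝ → ℝ → ℝ) (hfc : Continuous fun p : ℝ × ℝ => f p.1 p.2)
    (hf0 : ∀ x y, 0 ≤ f x y) :
    (∫ y in (0:ℝ)..1, ∫ x in (0:ℝ)..((1-y)/2), f x y) ≤ intTm d e f := by
  have hcont1 : Continuous fun y : ℝ => ∫ x in (0:ℝ)..((1-y)/2), f x y := by
    apply intervalIntegral.continuous_parametric_intervalIntegral_of_continuous
      (f := fun y x => f x y) (by fun_prop) (by fun_prop)
  have hcont2 : Continuous fun y : ℝ => ∫ x in (0:ℝ)..(d + (e - d)*y), f x y := by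
    apply intervalIntegral.continuous_parametric_intervalIntegral_of_continuous
      (f := fun y x => f x y) (by fun_prop) (by fun_prop)
  apply intervalIntegral.integral_mono_on (by norm_num)
    (hcont1.intervalIntegrable _ _) (hcont2.intervalIntegrable _ _)
  intro y hy
  have h1 : (1-y)/2 ≤ d + (e-d)*y := by nlinarith [hy.1, hy.2, he.1, he.2]
  have hcx : Continuous fun x => f x y := hfc.comp (continuous_id.prodMk continuous_const)
  have hsplit : (∫ x in (0:ℝ)..((1-y)/2), f x y) + (∫ x in ((1-y)/2)..(d + (e-d)*y), f x y)
      = ∫ x in (0:ℝ)..(d + (e-d)*y), f x y :=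
    intervalIntegral.integral_add_adjacent_intervals
      (hcx.intervalIntegrable _ _) (hcx.intervalIntegrable _ _)
  have h2 : 0 ≤ ∫ x in ((1-y)/2)..(d + (e-d)*y), f x y :=
    intervalIntegral.integral_nonneg h1 (fun x _ => hf0 x y)
  linarith

lemma intTp_ge_tri (d e : ℝ) (hd0 : 0 ≤ d) (hd : d ≤ 1/2) (he : e ∈ Icc (0:ℝ) 1)
    (f : ℝ → ℝ → ℝ) (hfc : Continuous fun p : ℝ × ℝ => f p.1 p.2)
    (hf0 : ∀ x y, 0 ≤ f x y) :
    (∫ y in (0:ℝ)..1, ∫ x in ((1+y)/2)..(1:ℝ), f x y) ≤ intTp d e f := by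
  have hcont1 : Continuous fun y : ℝ => ∫ x in ((1+y)/2)..(1:ℝ), f x y := by
    have h := intervalIntegral.continuous_parametric_intervalIntegral_of_continuous
      (f := fun y x => f x y) (a₀ := (1:ℝ)) (μ := volume)
      (by fun_prop) (s := fun y : ℝ => (1+y)/2) (by fun_prop)
    have heq : (fun y : ℝ => ∫ x in ((1+y)/2)..(1:ℝ), f x y)
        = fun y : ℝ => -∫ x in (1:ℝ)..((1+y)/2), f x y :=
      funext fun y => intervalIntegral.integral_symm 1 ((1+y)/2)
    rw [heq]; exact h.neg
  have hcont2 : Continuous fun y : ℝ => ∫ x in (d + (e - d)*y)..(1:ℝ), f x y := by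
    have h := intervalIntegral.continuous_parametric_intervalIntegral_of_continuous
      (f := fun y x => f x y) (a₀ := (1:ℝ)) (μ := volume)
      (by fun_prop) (s := fun y : ℝ => d + (e - d)*y) (by fun_prop)
    have heq : (fun y : ℝ => ∫ x in (d + (e - d)*y)..(1:ℝ), f x y)
        = fun y : ℝ => -∫ x in (1:ℝ)..(d + (e - d)*y), f x y :=
      funext fun y => intervalIntegral.integral_symm 1 (d + (e - d)*y)
    rw [heq]; exact h.neg
  apply intervalIntegral.integral_mono_on (by norm_num)
    (hcont1.intervalIntegrable _ _) (hcont2.intervalIntegrable _ _)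
  intro y hy
  have h1 : d + (e-d)*y ≤ (1+y)/2 := by nlinarith [hy.1, hy.2, he.1, he.2]
  have hcx : Continuous fun x => f x y := hfc.comp (continuous_id.prodMk continuous_const)
  have hsplit : (∫ x in (d + (e-d)*y)..((1+y)/2), f x y) + (∫ x in ((1+y)/2)..(1:ℝ), f x y)
      = ∫ x in (d + (e-d)*y)..(1:ℝ), f x y :=
    intervalIntegral.integral_add_adjacent_intervals
      (hcx.intervalIntegrable _ _) (hcx.intervalIntegrable _ _)
  have h2 : 0 ≤ ∫ x in (d + (e-d)*y)..((1+y)/2), f x y :=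
    intervalIntegral.integral_nonneg h1 (fun x _ => hf0 x y)
  linarith

lemma intTm_le (d e M : ℝ) (hd : d ∈ Icc (0:ℝ) 1) (he : e ∈ Icc (0:ℝ) 1)
    (f : ℝ → ℝ → ℝ) (hfc : Continuous fun p : ℝ × ℝ => f p.1 p.2) (hM : 0 ≤ M)
    (hfM : ∀ x ∈ Icc (0:ℝ) 1, ∀ y ∈ Icc (0:ℝ) 1, f x y ≤ M) : intTm d e f ≤ M := by
  have hcont2 : Continuous fun y : ℝ => ∫ x in (0:ℝ)..(d + (e - d)*y), f x y := by
    apply intervalIntegral.continuous_parametric_intervalIntegral_of_continuous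
      (f := fun y x => f x y) (by fun_prop) (by fun_prop)
  have key : ∀ y ∈ Icc (0:ℝ) 1, (∫ x in (0:ℝ)..(d + (e - d)*y), f x y) ≤ M := by
    intro y hy
    have hX0 : 0 ≤ d + (e-d)*y := by nlinarith [hd.1, hd.2, he.1, he.2, hy.1, hy.2]
    have hX1 : d + (e-d)*y ≤ 1 := by nlinarith [hd.1, hd.2, he.1, he.2, hy.1, hy.2]
    have hcx : Continuous fun x => f x y := hfc.comp (continuous_id.prodMk continuous_const)
    calc (∫ x in (0:ℝ)..(d + (e - d)*y), f x y) ≤ ∫ _x in (0:ℝ)..(d + (e - d)*y), M := by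
          apply intervalIntegral.integral_mono_on hX0 (hcx.intervalIntegrable _ _)
            intervalIntegrable_const
          exact fun x hx => hfM x ⟨hx.1, le_trans hx.2 hX1⟩ y hy
      _ = (d + (e-d)*y) * M := by simp [smul_eq_mul]
      _ ≤ M := by nlinarith
  calc intTm d e f ≤ ∫ _y in (0:ℝ)..1, M := by
        apply intervalIntegral.integral_mono_on (by norm_num)
          (hcont2.intervalIntegrable _ _) intervalIntegrable_const key
    _ = M := by simp

lemma intTp_le (d e M : ℝ) (hd : d ∈ Icc (0:ℝ) 1) (he : e ∈ Icc (0:ℝ) 1)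
    (f : ℝ → ℝ → ℝ) (hfc : Continuous fun p : ℝ × ℝ => f p.1 p.2) (hM : 0 ≤ M)
    (hfM : ∀ x ∈ Icc (0:ℝ) 1, ∀ y ∈ Icc (0:ℝ) 1, f x y ≤ M) : intTp d e f ≤ M := by
  have hcont2 : Continuous fun y : ℝ => ∫ x in (d + (e - d)*y)..(1:ℝ), f x y := by
    have h := intervalIntegral.continuous_parametric_intervalIntegral_of_continuous
      (f := fun y x => f x y) (a₀ := (1:ℝ)) (μ := volume)
      (by fun_prop) (s := fun y : ℝ => d + (e - d)*y) (by fun_prop)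
    have heq : (fun y : ℝ => ∫ x in (d + (e - d)*y)..(1:ℝ), f x y)
        = fun y : ℝ => -∫ x in (1:ℝ)..(d + (e - d)*y), f x y :=
      funext fun y => intervalIntegral.integral_symm 1 (d + (e - d)*y)
    rw [heq]; exact h.neg
  have key : ∀ y ∈ Icc (0:ℝ) 1, (∫ x in (d + (e - d)*y)..(1:ℝ), f x y) ≤ M := by
    intro y hy
    have hX0 : 0 ≤ d + (e-d)*y := by nlinarith [hd.1, hd.2, he.1, he.2, hy.1, hy.2]
    have hX1 : d + (e-d)*y ≤ 1 := by nlinarith [hd.1, hd.2, he.1, he.2, hy.1, hy.2]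
    have hcx : Continuous fun x => f x y := hfc.comp (continuous_id.prodMk continuous_const)
    calc (∫ x in (d + (e - d)*y)..(1:ℝ), f x y) ≤ ∫ _x in (d + (e - d)*y)..(1:ℝ), M := by
          apply intervalIntegral.integral_mono_on hX1 (hcx.intervalIntegrable _ _)
            intervalIntegrable_const
          exact fun x hx => hfM x ⟨le_trans hX0 hx.1, hx.2⟩ y hy
      _ = (1 - (d + (e-d)*y)) * M := by simp [smul_eq_mul]
      _ ≤ M := by nlinarith
  calc intTp d e f ≤ ∫ _y in (0:ℝ)..1, M := by
        apply intervalIntegral.integral_mono_on (by norm_num)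
          (hcont2.intervalIntegrable _ _) intervalIntegrable_const key
    _ = M := by simp

lemma intTm_const (d e K : ℝ) : intTm d e (fun _ _ => K) = K*((d+e)/2) := by
  unfold intTm
  have hin : ∀ Y : ℝ, (∫ _x in (0:ℝ)..(d + (e - d)*Y), K)
      = (K*d) + (K*(e-d))*Y + 0*Y^2 + 0*Y^3 + 0*Y^4 + 0*Y^5 := by
    intro Y
    rw [ipoly K 0 0 0 0 0 0 (d + (e-d)*Y) (fun x => by ring)]
    ring
  rw [ipoly _ _ _ _ _ _ 0 1 hin]
  ring

lemma intTp_const (d e K : ℝ) : intTp d e (fun _ _ => K) = K*(1-(d+e)/2) := by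
  unfold intTp
  have hin : ∀ Y : ℝ, (∫ _x in (d + (e - d)*Y)..(1:ℝ), K)
      = (K - K*d) + (-(K*(e-d)))*Y + 0*Y^2 + 0*Y^3 + 0*Y^4 + 0*Y^5 := by
    intro Y
    rw [ipoly K 0 0 0 0 0 (d + (e-d)*Y) 1 (fun x => by ring)]
    ring
  rw [ipoly _ _ _ _ _ _ 0 1 hin]
  ring

lemma abs_le_K_sqrt {x S : ℝ} (K : ℝ) (hS : 0 ≤ S) (hK : 0 ≤ K) (h : x^2 ≤ K^2*S) :
    |x| ≤ K*Real.sqrt S := by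
  rw [← Real.sqrt_sq_eq_abs]
  calc Real.sqrt (x^2) ≤ Real.sqrt (K^2*S) := Real.sqrt_le_sqrt h
    _ = K*Real.sqrt S := by rw [Real.sqrt_mul (by positivity), Real.sqrt_sq hK]

lemma sqrt_le_of_le_sq {S T : ℝ} (hT : 0 ≤ T) (h : S ≤ T^2) : Real.sqrt S ≤ T := by
  calc Real.sqrt S ≤ Real.sqrt (T^2) := Real.sqrt_le_sqrt h
    _ = T := Real.sqrt_sq hT

lemma tri0m_lb (c : Fin 4 → ℝ) :
    (c 0^2 + c 1^2 + c 2^2 + c 3^2)/10000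
      ≤ ∫ y in (0:ℝ)..1, ∫ x in (0:ℝ)..((1-y)/2), (rq1 c x y)^2 := by
  have hin : ∀ Y : ℝ, (∫ x in (0:ℝ)..((1-Y)/2), (rq1 c x Y)^2)
      = ((1/2)*(c 0)^2 + (1/4)*(c 0)*(c 1) + (1/12)*(c 0)*(c 3) + (1/24)*(c 1)^2
          + (1/32)*(c 1)*(c 3) + (1/160)*(c 3)^2)
        + (-(1/2)*(c 0)^2 - (1/2)*(c 0)*(c 1) + (c 0)*(c 2) - (1/4)*(c 0)*(c 3)
          - (1/8)*(c 1)^2 + (1/4)*(c 1)*(c 2) - (1/8)*(c 1)*(c 3) + (1/12)*(c 2)*(c 3)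
          - (1/32)*(c 3)^2)*Y
        + ((1/4)*(c 0)*(c 1) - (c 0)*(c 2) - (3/4)*(c 0)*(c 3) + (1/8)*(c 1)^2
          - (1/2)*(c 1)*(c 2) - (1/16)*(c 1)*(c 3) + (1/2)*(c 2)^2 - (1/4)*(c 2)*(c 3)
          - (1/48)*(c 3)^2)*Y^2
        + ((11/12)*(c 0)*(c 3) - (1/24)*(c 1)^2 + (1/4)*(c 1)*(c 2) + (3/8)*(c 1)*(c 3)
          - (1/2)*(c 2)^2 - (3/4)*(c 2)*(c 3) + (3/16)*(c 3)^2)*Y^3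
        + (-(7/32)*(c 1)*(c 3) + (11/12)*(c 2)*(c 3) + (9/32)*(c 3)^2)*Y^4
        + (-(203/480)*(c 3)^2)*Y^5 := by
    intro Y
    rw [ipoly ((c 0 + c 2*Y - c 3*Y^2)^2) (2*(c 1)*(c 0 + c 2*Y - c 3*Y^2))
        ((c 1)^2 + 2*(c 3)*(c 0 + c 2*Y - c 3*Y^2)) (2*(c 1)*(c 3)) ((c 3)^2) 0
        0 ((1-Y)/2) (fun x => by simp only [rq1]; ring)]
    ring
  rw [ipoly _ _ _ _ _ _ 0 1 hin]
  nlinarith [sq_nonneg (c 0 + (1250/7497)*c 1 + (2500/7497)*c 2 - (625/4998)*c 3),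
    sq_nonneg (c 1 - (1564375/1515643)*c 2 + (3750375/3031286)*c 3),
    sq_nonneg (c 2 - (18862375/23455646)*c 3), sq_nonneg (c 3)]

lemma tri0p_lb (c : Fin 4 → ℝ) :
    (c 0^2 + c 1^2 + c 2^2 + c 3^2)/10000
      ≤ ∫ y in (0:ℝ)..1, ∫ x in ((1+y)/2)..(1:ℝ), (rq1 c x y)^2 := by
  have hin : ∀ Y : ℝ, (∫ x in ((1+Y)/2)..(1:ℝ), (rq1 c x Y)^2)
      = ((1/2)*(c 0)^2 + (3/4)*(c 0)*(c 1) + (7/12)*(c 0)*(c 3) + (7/24)*(c 1)^2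
          + (15/32)*(c 1)*(c 3) + (31/160)*(c 3)^2)
        + (-(1/2)*(c 0)^2 - (1/2)*(c 0)*(c 1) + (c 0)*(c 2) - (1/4)*(c 0)*(c 3)
          - (1/8)*(c 1)^2 + (3/4)*(c 1)*(c 2) - (1/8)*(c 1)*(c 3) + (7/12)*(c 2)*(c 3)
          - (1/32)*(c 3)^2)*Y
        + (-(1/4)*(c 0)*(c 1) - (c 0)*(c 2) - (5/4)*(c 0)*(c 3) - (1/8)*(c 1)^2
          - (1/2)*(c 1)*(c 2) - (15/16)*(c 1)*(c 3) + (1/2)*(c 2)^2 - (1/4)*(c 2)*(c 3)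
          - (31/48)*(c 3)^2)*Y^2
        + ((11/12)*(c 0)*(c 3) - (1/24)*(c 1)^2 - (1/4)*(c 1)*(c 2) + (3/8)*(c 1)*(c 3)
          - (1/2)*(c 2)^2 - (5/4)*(c 2)*(c 3) + (3/16)*(c 3)^2)*Y^3
        + ((7/32)*(c 1)*(c 3) + (11/12)*(c 2)*(c 3) + (23/32)*(c 3)^2)*Y^4
        + (-(203/480)*(c 3)^2)*Y^5 := by
    intro Y
    rw [ipoly ((c 0 + c 2*Y - c 3*Y^2)^2) (2*(c 1)*(c 0 + c 2*Y - c 3*Y^2))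
        ((c 1)^2 + 2*(c 3)*(c 0 + c 2*Y - c 3*Y^2)) (2*(c 1)*(c 3)) ((c 3)^2) 0
        ((1+Y)/2) 1 (fun x => by simp only [rq1]; ring)]
    ring
  rw [ipoly _ _ _ _ _ _ 0 1 hin]
  nlinarith [sq_nonneg (c 0 + (6250/7497)*c 1 + (2500/7497)*c 2 + (8125/14994)*c 3),
    sq_nonneg (c 1 + (1549375/1485643)*c 2 + (2458375/2971286)*c 3),
    sq_nonneg (c 2 - (1501711375/1815856034)*c 3), sq_nonneg (c 3)]

lemma tri1m_lb (c : Fin 4 → ℝ) :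
    (c 1^2 + c 2^2 + c 3^2)/10000
      ≤ (∫ y in (0:ℝ)..1, ∫ x in (0:ℝ)..((1-y)/2), (c 1 + 2*c 3*x)^2)
        + ∫ y in (0:ℝ)..1, ∫ x in (0:ℝ)..((1-y)/2), (c 2 - 2*c 3*y)^2 := by
  have hinx : ∀ Y : ℝ, (∫ x in (0:ℝ)..((1-Y)/2), (c 1 + 2*c 3*x)^2)
      = ((1/2)*(c 1)^2 + (1/2)*(c 1)*(c 3) + (1/6)*(c 3)^2)
        + (-(1/2)*(c 1)^2 - (c 1)*(c 3) - (1/2)*(c 3)^2)*Y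
        + ((1/2)*(c 1)*(c 3) + (1/2)*(c 3)^2)*Y^2
        + (-(1/6)*(c 3)^2)*Y^3 + 0*Y^4 + 0*Y^5 := by
    intro Y
    rw [ipoly ((c 1)^2) (4*(c 1)*(c 3)) (4*(c 3)^2) 0 0 0
        0 ((1-Y)/2) (fun x => by ring)]
    ring
  have hiny : ∀ Y : ℝ, (∫ _x in (0:ℝ)..((1-Y)/2), (c 2 - 2*c 3*Y)^2)
      = ((1/2)*(c 2)^2)
        + (-(1/2)*(c 2)^2 - 2*(c 2)*(c 3))*Y
        + (2*(c 2)*(c 3) + 2*(c 3)^2)*Y^2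
        + (-2*(c 3)^2)*Y^3 + 0*Y^4 + 0*Y^5 := by
    intro Y
    rw [ipoly ((c 2 - 2*c 3*Y)^2) 0 0 0 0 0 0 ((1-Y)/2) (fun x => by ring)]
    ring
  rw [ipoly _ _ _ _ _ _ 0 1 hinx, ipoly _ _ _ _ _ _ 0 1 hiny]
  nlinarith [sq_nonneg (c 1 + (2500/7497)*c 3), sq_nonneg (c 2 - (5000/7497)*c 3),
    sq_nonneg (c 3)]

lemma tri1p_lb (c : Fin 4 → ℝ) :
    (c 1^2 + c 2^2 + c 3^2)/10000
      ≤ (∫ y in (0:ℝ)..1, ∫ x in ((1+y)/2)..(1:ℝ), (c 1 + 2*c 3*x)^2)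
        + ∫ y in (0:ℝ)..1, ∫ x in ((1+y)/2)..(1:ℝ), (c 2 - 2*c 3*y)^2 := by
  have hinx : ∀ Y : ℝ, (∫ x in ((1+Y)/2)..(1:ℝ), (c 1 + 2*c 3*x)^2)
      = ((1/2)*(c 1)^2 + (3/2)*(c 1)*(c 3) + (7/6)*(c 3)^2)
        + (-(1/2)*(c 1)^2 - (c 1)*(c 3) - (1/2)*(c 3)^2)*Y
        + (-(1/2)*(c 1)*(c 3) - (1/2)*(c 3)^2)*Y^2
        + (-(1/6)*(c 3)^2)*Y^3 + 0*Y^4 + 0*Y^5 := by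
    intro Y
    rw [ipoly ((c 1)^2) (4*(c 1)*(c 3)) (4*(c 3)^2) 0 0 0
        ((1+Y)/2) 1 (fun x => by ring)]
    ring
  have hiny : ∀ Y : ℝ, (∫ _x in ((1+Y)/2)..(1:ℝ), (c 2 - 2*c 3*Y)^2)
      = ((1/2)*(c 2)^2)
        + (-(1/2)*(c 2)^2 - 2*(c 2)*(c 3))*Y
        + (2*(c 2)*(c 3) + 2*(c 3)^2)*Y^2
        + (-2*(c 3)^2)*Y^3 + 0*Y^4 + 0*Y^5 := by
    intro Y
    rw [ipoly ((c 2 - 2*c 3*Y)^2) 0 0 0 0 0 ((1+Y)/2) 1 (fun x => by ring)]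
    ring
  rw [ipoly _ _ _ _ _ _ 0 1 hinx, ipoly _ _ _ _ _ _ 0 1 hiny]
  nlinarith [sq_nonneg (c 1 + (12500/7497)*c 3), sq_nonneg (c 2 - (5000/7497)*c 3),
    sq_nonneg (c 3)]

lemma rq1_abs_le (c : Fin 4 → ℝ) {x y : ℝ} (hx : x ∈ Icc (0:ℝ) 1) (hy : y ∈ Icc (0:ℝ) 1) :
    |rq1 c x y| ≤ |c 0| + |c 1| + |c 2| + |c 3| := by
  have hxa : |x| ≤ 1 := abs_le.mpr ⟨by linarith [hx.1], hx.2⟩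
  have hya : |y| ≤ 1 := abs_le.mpr ⟨by linarith [hy.1], hy.2⟩
  have hsq : |x^2 - y^2| ≤ 1 := by
    rw [abs_le]
    constructor <;> nlinarith [hx.1, hx.2, hy.1, hy.2]
  have u1 : |c 1 * x| ≤ |c 1| := by
    rw [abs_mul]; exact mul_le_of_le_one_right (abs_nonneg _) hxa
  have u2 : |c 2 * y| ≤ |c 2| := by
    rw [abs_mul]; exact mul_le_of_le_one_right (abs_nonneg _) hya
  have u3 : |c 3 * (x^2 - y^2)| ≤ |c 3| := by
    rw [abs_mul]; exact mul_le_of_le_one_right (abs_nonneg _) hsq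
  calc |rq1 c x y| = |c 0 + c 1 * x + c 2 * y + c 3 * (x^2 - y^2)| := by rw [rq1]
    _ ≤ |c 0 + c 1 * x + c 2 * y| + |c 3 * (x^2 - y^2)| := abs_add_le _ _
    _ ≤ (|c 0| + |c 1 * x| + |c 2 * y|) + |c 3 * (x^2 - y^2)| := by
        linarith [abs_add_three (c 0) (c 1 * x) (c 2 * y)]
    _ ≤ |c 0| + |c 1| + |c 2| + |c 3| := by linarith

set_option maxHeartbeats 2000000 in
/-- Inverse inequalities for rotated-Q1 IFE functions, uniform in the
interface location (reference element, `h = 1`):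
(i) `|φ|_{k,∞,T} ≤ C |φ|_{k,T}` and (ii) `|φ|_{k,T} ≤ C |φ|_{l,T}` for `0 ≤ l ≤ k ≤ 2`. -/
theorem ife_inverse_inequalities
    (βm βp : ℝ) (hβm : 0 < βm) (hβp : 0 < βp) :
    ∃ C > 0, ∀ d ∈ Ioo (0:ℝ) 1, ∀ e ∈ Ioo (0:ℝ) 1,
      ∀ cm cp : Fin 4 → ℝ,
        J1 d e cm cp → J2 cm cp → J3 βm βp d e cm cp →
        (∀ k a b : ℕ, a + b = k → k ≤ 2 →
          ∀ x ∈ Icc (0:ℝ) 1, ∀ y ∈ Icc (0:ℝ) 1,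
            (x < d + (e - d) * y →
              |rq1D cm a b x y| ≤ C * Real.sqrt (semiSq d e cm cp k)) ∧
            (d + (e - d) * y < x →
              |rq1D cp a b x y| ≤ C * Real.sqrt (semiSq d e cm cp k))) ∧
        (∀ l k : ℕ, l ≤ k → k ≤ 2 →
          Real.sqrt (semiSq d e cm cp k) ≤ C * Real.sqrt (semiSq d e cm cp l)) := by
  refine ⟨10000*(1 + |βp - βm|/βm + |βp - βm|/βp), by positivity, ?_⟩
  rintro d ⟨hd0, hd1⟩ e ⟨he0, he1⟩ cm cp h1 h2 h3
  set B : ℝ := 1 + |βp - βm|/βm + |βp - βm|/βp with hBdef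
  have hdivm : 0 ≤ |βp - βm|/βm := by positivity
  have hdivp : 0 ≤ |βp - βm|/βp := by positivity
  have hBm : |βp - βm|/βm ≤ B := by rw [hBdef]; linarith only [hdivm, hdivp]
  have hBp : |βp - βm|/βp ≤ B := by rw [hBdef]; linarith only [hdivm, hdivp]
  have hB1 : (1:ℝ) ≤ B := by rw [hBdef]; linarith only [hdivm, hdivp]
  have hIccd : d ∈ Icc (0:ℝ) 1 := ⟨hd0.le, hd1.le⟩
  have hIcce : e ∈ Icc (0:ℝ) 1 := ⟨he0.le, he1.le⟩
  obtain ⟨h11, h12⟩ := h1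
  simp only [rq1] at h11 h12
  have h2' : cm 3 = cp 3 := h2
  have hb0 : cp 0 = cm 0 - (cp 1 - cm 1)*d := by linear_combination -h11 + d^2*h2'
  have hb2 : cp 2 = cm 2 + (cp 1 - cm 1)*(d - e) := by
    linear_combination -h12 + (e^2-1)*h2' - hb0
  have hfl : βp*cp 1 - βm*cm 1 + (d - e)*(βp*cp 2 - βm*cm 2)
      + 2*e*(βp*cp 3 - βm*cm 3) = 0 := by
    have h3' : fluxDefect βm βp d e cm cp = 0 := h3
    unfold fluxDefect at h3'
    rw [ipoly ((βp*(cp 1 + 2*cp 3*d) - βm*(cm 1 + 2*cm 3*d))*1 + (βp*cp 2 - βm*cm 2)*(d-e))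
        (2*(βp*cp 3 - βm*cm 3)*(e-d) - 2*(βp*cp 3 - βm*cm 3)*(d-e)) 0 0 0 0 0 1
        (fun t => by ring)] at h3'
    linear_combination h3'
  have hdp : (cp 1 - cm 1)*(βp*(1+(d-e)^2))
      = -((βp-βm)*(cm 1 + (d-e)*cm 2 + 2*e*cm 3)) := by
    linear_combination hfl - (d-e)*βp*hb2 + 2*e*βp*h2'
  have hdm : (cp 1 - cm 1)*(βm*(1+(d-e)^2))
      = -((βp-βm)*(cp 1 + (d-e)*cp 2 + 2*e*cp 3)) := by
    linear_combination hfl - (d-e)*βm*hb2 + 2*e*βm*h2'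
  have hw : |d - e| ≤ 1 := abs_le.mpr ⟨by linarith only [hd0, he1], by linarith only [hd1, he0]⟩
  have h2e : |2*e| ≤ 2 := by rw [abs_of_pos (by linarith only [he0] : (0:ℝ) < 2*e)]; linarith only [he1]
  have tri_m : |cm 1 + (d-e)*cm 2 + 2*e*cm 3| ≤ |cm 1| + |cm 2| + 2*|cm 3| := by
    have u1 : |(d-e)*cm 2| ≤ |cm 2| := by
      rw [abs_mul]; exact mul_le_of_le_one_left (abs_nonneg _) hw
    have u2 : |2*e*cm 3| ≤ 2*|cm 3| := by
      rw [abs_mul]; nlinarith only [abs_nonneg (cm 3), h2e, abs_nonneg (2*e)]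
    linarith only [abs_add_three (cm 1) ((d-e)*cm 2) (2*e*cm 3), u1, u2]
  have tri_p : |cp 1 + (d-e)*cp 2 + 2*e*cp 3| ≤ |cp 1| + |cp 2| + 2*|cp 3| := by
    have u1 : |(d-e)*cp 2| ≤ |cp 2| := by
      rw [abs_mul]; exact mul_le_of_le_one_left (abs_nonneg _) hw
    have u2 : |2*e*cp 3| ≤ 2*|cp 3| := by
      rw [abs_mul]; nlinarith only [abs_nonneg (cp 3), h2e, abs_nonneg (2*e)]
    linarith only [abs_add_three (cp 1) ((d-e)*cp 2) (2*e*cp 3), u1, u2]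
  have hdabs_p : |cp 1 - cm 1| * βp ≤ |βp - βm| * (|cm 1| + |cm 2| + 2*|cm 3|) := by
    have h0 : |cp 1 - cm 1| * (βp*(1+(d-e)^2))
        = |βp - βm| * |cm 1 + (d-e)*cm 2 + 2*e*cm 3| := by
      rw [← abs_of_pos (show (0:ℝ) < βp*(1+(d-e)^2) by positivity), ← abs_mul, hdp,
        abs_neg, abs_mul]
    calc |cp 1 - cm 1| * βp ≤ |cp 1 - cm 1| * (βp*(1+(d-e)^2)) := by
          nlinarith only [mul_nonneg (abs_nonneg (cp 1 - cm 1)) (mul_nonneg hβp.le (sq_nonneg (d-e)))]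
      _ = |βp - βm| * |cm 1 + (d-e)*cm 2 + 2*e*cm 3| := h0
      _ ≤ |βp - βm| * (|cm 1| + |cm 2| + 2*|cm 3|) :=
          mul_le_mul_of_nonneg_left tri_m (abs_nonneg _)
  have hdabs_m : |cp 1 - cm 1| * βm ≤ |βp - βm| * (|cp 1| + |cp 2| + 2*|cp 3|) := by
    have h0 : |cp 1 - cm 1| * (βm*(1+(d-e)^2))
        = |βp - βm| * |cp 1 + (d-e)*cp 2 + 2*e*cp 3| := by
      rw [← abs_of_pos (show (0:ℝ) < βm*(1+(d-e)^2) by positivity), ← abs_mul, hdm,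
        abs_neg, abs_mul]
    calc |cp 1 - cm 1| * βm ≤ |cp 1 - cm 1| * (βm*(1+(d-e)^2)) := by
          nlinarith only [mul_nonneg (abs_nonneg (cp 1 - cm 1)) (mul_nonneg hβm.le (sq_nonneg (d-e)))]
      _ = |βp - βm| * |cp 1 + (d-e)*cp 2 + 2*e*cp 3| := h0
      _ ≤ |βp - βm| * (|cp 1| + |cp 2| + 2*|cp 3|) :=
          mul_le_mul_of_nonneg_left tri_p (abs_nonneg _)
  -- seminorm expressions
  have hS0eq : semiSq d e cm cp 0
      = intTm d e (fun x y => (rq1 cm x y)^2) + intTp d e (fun x y => (rq1 cp x y)^2) := by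
    simp only [semiSq, rq1D]
  have hS1eq : semiSq d e cm cp 1
      = (intTm d e (fun x y => (cm 1 + 2*cm 3*x)^2)
          + intTp d e (fun x y => (cp 1 + 2*cp 3*x)^2))
        + (intTm d e (fun x y => (cm 2 - 2*cm 3*y)^2)
          + intTp d e (fun x y => (cp 2 - 2*cp 3*y)^2)) := by
    simp only [semiSq, rq1D]
  have hS2eq : semiSq d e cm cp 2 = 8*cm 3^2 := by
    simp only [semiSq, rq1D]
    rw [intTm_const, intTp_const, intTm_const, intTp_const, intTm_const, intTp_const]
    linear_combination (-(8*(1-(d+e)/2))*(cp 3 + cm 3))*h2'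
  have hTm0nn : 0 ≤ intTm d e (fun x y => (rq1 cm x y)^2) :=
    intTm_nonneg d e hIccd hIcce _ (fun x y => sq_nonneg _)
  have hTp0nn : 0 ≤ intTp d e (fun x y => (rq1 cp x y)^2) :=
    intTp_nonneg d e hIccd hIcce _ (fun x y => sq_nonneg _)
  have hT1a : 0 ≤ intTm d e (fun x y => (cm 1 + 2*cm 3*x)^2) :=
    intTm_nonneg d e hIccd hIcce _ (fun x y => sq_nonneg _)
  have hT1b : 0 ≤ intTp d e (fun x y => (cp 1 + 2*cp 3*x)^2) :=
    intTp_nonneg d e hIccd hIcce _ (fun x y => sq_nonneg _)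
  have hT1c : 0 ≤ intTm d e (fun x y => (cm 2 - 2*cm 3*y)^2) :=
    intTm_nonneg d e hIccd hIcce _ (fun x y => sq_nonneg _)
  have hT1d : 0 ≤ intTp d e (fun x y => (cp 2 - 2*cp 3*y)^2) :=
    intTp_nonneg d e hIccd hIcce _ (fun x y => sq_nonneg _)
  have hS0nn : 0 ≤ semiSq d e cm cp 0 := by rw [hS0eq]; linarith only [hTm0nn, hTp0nn]
  have hS1nn : 0 ≤ semiSq d e cm cp 1 := by rw [hS1eq]; linarith only [hT1a, hT1b, hT1c, hT1d]
  have hS2nn : 0 ≤ semiSq d e cm cp 2 := by rw [hS2eq]; positivity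
  have hs0nn : 0 ≤ Real.sqrt (semiSq d e cm cp 0) := Real.sqrt_nonneg _
  have hs1nn : 0 ≤ Real.sqrt (semiSq d e cm cp 1) := Real.sqrt_nonneg _
  have hs2nn : 0 ≤ Real.sqrt (semiSq d e cm cp 2) := Real.sqrt_nonneg _
  have hBs0 : 0 ≤ B*Real.sqrt (semiSq d e cm cp 0) := mul_nonneg (by linarith only [hB1]) hs0nn
  have hBs1 : 0 ≤ B*Real.sqrt (semiSq d e cm cp 1) := mul_nonneg (by linarith only [hB1]) hs1nn
  have hBs2 : 0 ≤ B*Real.sqrt (semiSq d e cm cp 2) := mul_nonneg (by linarith only [hB1]) hs2nn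
  -- KEY 0 : all coefficients bounded by the L² norm
  have key0 : |cm 0| ≤ 500*(B*Real.sqrt (semiSq d e cm cp 0))
      ∧ |cm 1| ≤ 500*(B*Real.sqrt (semiSq d e cm cp 0))
      ∧ |cm 2| ≤ 500*(B*Real.sqrt (semiSq d e cm cp 0))
      ∧ |cm 3| ≤ 500*(B*Real.sqrt (semiSq d e cm cp 0))
      ∧ |cp 0| ≤ 500*(B*Real.sqrt (semiSq d e cm cp 0))
      ∧ |cp 1| ≤ 500*(B*Real.sqrt (semiSq d e cm cp 0))
      ∧ |cp 2| ≤ 500*(B*Real.sqrt (semiSq d e cm cp 0)) := by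
    have habsd : |d| ≤ 1 := abs_le.mpr ⟨by linarith only [hd0], by linarith only [hd1]⟩
    rcases le_total (1/2:ℝ) d with hdh | hdh
    · have hQ : (cm 0^2 + cm 1^2 + cm 2^2 + cm 3^2)/10000 ≤ semiSq d e cm cp 0 := by
        calc (cm 0^2 + cm 1^2 + cm 2^2 + cm 3^2)/10000
            ≤ ∫ y in (0:ℝ)..1, ∫ x in (0:ℝ)..((1-y)/2), (rq1 cm x y)^2 := tri0m_lb cm
          _ ≤ intTm d e (fun x y => (rq1 cm x y)^2) :=
              intTm_ge_tri d e hdh hd1.le hIcce _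
                (by simp only [rq1]; fun_prop) (fun x y => sq_nonneg _)
          _ ≤ _ := by rw [hS0eq]; linarith only [hTm0nn, hTp0nn]
      have hm0 : |cm 0| ≤ 100*Real.sqrt (semiSq d e cm cp 0) := by
        apply abs_le_K_sqrt 100 hS0nn (by norm_num)
        nlinarith only [hQ, sq_nonneg (cm 1), sq_nonneg (cm 2), sq_nonneg (cm 3)]
      have hm1 : |cm 1| ≤ 100*Real.sqrt (semiSq d e cm cp 0) := by
        apply abs_le_K_sqrt 100 hS0nn (by norm_num)
        nlinarith only [hQ, sq_nonneg (cm 0), sq_nonneg (cm 2), sq_nonneg (cm 3)]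
      have hm2 : |cm 2| ≤ 100*Real.sqrt (semiSq d e cm cp 0) := by
        apply abs_le_K_sqrt 100 hS0nn (by norm_num)
        nlinarith only [hQ, sq_nonneg (cm 0), sq_nonneg (cm 1), sq_nonneg (cm 3)]
      have hm3 : |cm 3| ≤ 100*Real.sqrt (semiSq d e cm cp 0) := by
        apply abs_le_K_sqrt 100 hS0nn (by norm_num)
        nlinarith only [hQ, sq_nonneg (cm 0), sq_nonneg (cm 1), sq_nonneg (cm 2)]
      have hdel : |cp 1 - cm 1| ≤ 400*(B*Real.sqrt (semiSq d e cm cp 0)) := by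
        have h6 : |cp 1 - cm 1| ≤ (|βp - βm|/βp)*(400*Real.sqrt (semiSq d e cm cp 0)) := by
          rw [div_mul_eq_mul_div, le_div_iff₀ hβp]
          calc |cp 1 - cm 1| * βp ≤ |βp - βm| * (|cm 1| + |cm 2| + 2*|cm 3|) := hdabs_p
            _ ≤ |βp - βm| * (400*Real.sqrt (semiSq d e cm cp 0)) :=
                mul_le_mul_of_nonneg_left (by linarith only [hm1, hm2, hm3]) (abs_nonneg _)
        calc |cp 1 - cm 1| ≤ (|βp - βm|/βp)*(400*Real.sqrt (semiSq d e cm cp 0)) := h6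
          _ ≤ B*(400*Real.sqrt (semiSq d e cm cp 0)) :=
              mul_le_mul_of_nonneg_right hBp (by positivity)
          _ = 400*(B*Real.sqrt (semiSq d e cm cp 0)) := by ring
      have hp1 : |cp 1| ≤ 500*(B*Real.sqrt (semiSq d e cm cp 0)) := by
        have h8 := abs_add_le (cm 1) (cp 1 - cm 1)
        rw [show cm 1 + (cp 1 - cm 1) = cp 1 from by ring] at h8
        nlinarith only [h8, hm1, hdel, hs0nn, hs1nn, mul_nonneg (show (0:ℝ) ≤ B - 1 by linarith only [hB1]) hs0nn]
      have hp0 : |cp 0| ≤ 500*(B*Real.sqrt (semiSq d e cm cp 0)) := by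
        have h7 : |cp 0| ≤ |cm 0| + |cp 1 - cm 1| := by
          rw [hb0, sub_eq_add_neg]
          refine (abs_add_le _ _).trans ?_
          rw [abs_neg, abs_mul]
          nlinarith only [abs_nonneg (cp 1 - cm 1), abs_nonneg d, habsd]
        nlinarith only [h7, hm0, hdel, hs0nn, mul_nonneg (show (0:ℝ) ≤ B - 1 by linarith only [hB1]) hs0nn]
      have hp2 : |cp 2| ≤ 500*(B*Real.sqrt (semiSq d e cm cp 0)) := by
        have h7 : |cp 2| ≤ |cm 2| + |cp 1 - cm 1| := by
          rw [hb2]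
          refine (abs_add_le _ _).trans ?_
          rw [abs_mul]
          nlinarith only [abs_nonneg (cp 1 - cm 1), abs_nonneg (d-e), hw]
        nlinarith only [h7, hm2, hdel, hs0nn, mul_nonneg (show (0:ℝ) ≤ B - 1 by linarith only [hB1]) hs0nn]
      refine ⟨?_, ?_, ?_, ?_, hp0, hp1, hp2⟩ <;>
        nlinarith only [hm0, hm1, hm2, hm3, hs0nn, mul_nonneg (show (0:ℝ) ≤ B - 1 by linarith only [hB1]) hs0nn]
    · have hQ : (cp 0^2 + cp 1^2 + cp 2^2 + cp 3^2)/10000 ≤ semiSq d e cm cp 0 := by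
        calc (cp 0^2 + cp 1^2 + cp 2^2 + cp 3^2)/10000
            ≤ ∫ y in (0:ℝ)..1, ∫ x in ((1+y)/2)..(1:ℝ), (rq1 cp x y)^2 := tri0p_lb cp
          _ ≤ intTp d e (fun x y => (rq1 cp x y)^2) :=
              intTp_ge_tri d e hd0.le hdh hIcce _
                (by simp only [rq1]; fun_prop) (fun x y => sq_nonneg _)
          _ ≤ _ := by rw [hS0eq]; linarith only [hTm0nn, hTp0nn]
      have hp0 : |cp 0| ≤ 100*Real.sqrt (semiSq d e cm cp 0) := by
        apply abs_le_K_sqrt 100 hS0nn (by norm_num)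
        nlinarith only [hQ, sq_nonneg (cp 1), sq_nonneg (cp 2), sq_nonneg (cp 3)]
      have hp1 : |cp 1| ≤ 100*Real.sqrt (semiSq d e cm cp 0) := by
        apply abs_le_K_sqrt 100 hS0nn (by norm_num)
        nlinarith only [hQ, sq_nonneg (cp 0), sq_nonneg (cp 2), sq_nonneg (cp 3)]
      have hp2 : |cp 2| ≤ 100*Real.sqrt (semiSq d e cm cp 0) := by
        apply abs_le_K_sqrt 100 hS0nn (by norm_num)
        nlinarith only [hQ, sq_nonneg (cp 0), sq_nonneg (cp 1), sq_nonneg (cp 3)]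
      have hp3 : |cp 3| ≤ 100*Real.sqrt (semiSq d e cm cp 0) := by
        apply abs_le_K_sqrt 100 hS0nn (by norm_num)
        nlinarith only [hQ, sq_nonneg (cp 0), sq_nonneg (cp 1), sq_nonneg (cp 2)]
      have hm3 : |cm 3| ≤ 100*Real.sqrt (semiSq d e cm cp 0) := by rw [h2']; exact hp3
      have hdel : |cp 1 - cm 1| ≤ 400*(B*Real.sqrt (semiSq d e cm cp 0)) := by
        have h6 : |cp 1 - cm 1| ≤ (|βp - βm|/βm)*(400*Real.sqrt (semiSq d e cm cp 0)) := by
          rw [div_mul_eq_mul_div, le_div_iff₀ hβm]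
          calc |cp 1 - cm 1| * βm ≤ |βp - βm| * (|cp 1| + |cp 2| + 2*|cp 3|) := hdabs_m
            _ ≤ |βp - βm| * (400*Real.sqrt (semiSq d e cm cp 0)) :=
                mul_le_mul_of_nonneg_left (by linarith only [hp1, hp2, hp3]) (abs_nonneg _)
        calc |cp 1 - cm 1| ≤ (|βp - βm|/βm)*(400*Real.sqrt (semiSq d e cm cp 0)) := h6
          _ ≤ B*(400*Real.sqrt (semiSq d e cm cp 0)) :=
              mul_le_mul_of_nonneg_right hBm (by positivity)
          _ = 400*(B*Real.sqrt (semiSq d e cm cp 0)) := by ring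
      have hm1 : |cm 1| ≤ 500*(B*Real.sqrt (semiSq d e cm cp 0)) := by
        have h8 : |cm 1| ≤ |cp 1| + |cp 1 - cm 1| := by
          have t := abs_sub_abs_le_abs_sub (cm 1) (cp 1)
          rw [abs_sub_comm] at t
          linarith only [t]
        nlinarith only [h8, hp1, hdel, hs0nn, hs1nn, mul_nonneg (show (0:ℝ) ≤ B - 1 by linarith only [hB1]) hs0nn]
      have hm0 : |cm 0| ≤ 500*(B*Real.sqrt (semiSq d e cm cp 0)) := by
        have hb0' : cm 0 = cp 0 + (cp 1 - cm 1)*d := by linear_combination -hb0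
        have h7 : |cm 0| ≤ |cp 0| + |cp 1 - cm 1| := by
          rw [hb0']
          refine (abs_add_le _ _).trans ?_
          rw [abs_mul]
          nlinarith only [abs_nonneg (cp 1 - cm 1), abs_nonneg d, habsd]
        nlinarith only [h7, hp0, hdel, hs0nn, mul_nonneg (show (0:ℝ) ≤ B - 1 by linarith only [hB1]) hs0nn]
      have hm2 : |cm 2| ≤ 500*(B*Real.sqrt (semiSq d e cm cp 0)) := by
        have hb2' : cm 2 = cp 2 - (cp 1 - cm 1)*(d-e) := by linear_combination -hb2
        have h7 : |cm 2| ≤ |cp 2| + |cp 1 - cm 1| := by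
          rw [hb2', sub_eq_add_neg]
          refine (abs_add_le _ _).trans ?_
          rw [abs_neg, abs_mul]
          nlinarith only [abs_nonneg (cp 1 - cm 1), abs_nonneg (d-e), hw]
        nlinarith only [h7, hp2, hdel, hs0nn, mul_nonneg (show (0:ℝ) ≤ B - 1 by linarith only [hB1]) hs0nn]
      refine ⟨hm0, hm1, hm2, ?_, ?_, ?_, ?_⟩ <;>
        nlinarith only [hm3, hp0, hp1, hp2, hp3, hs0nn, mul_nonneg (show (0:ℝ) ≤ B - 1 by linarith only [hB1]) hs0nn]
  -- KEY 1 : first-order coefficients bounded by the H¹ seminorm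
  have key1 : |cm 1| ≤ 500*(B*Real.sqrt (semiSq d e cm cp 1))
      ∧ |cm 2| ≤ 500*(B*Real.sqrt (semiSq d e cm cp 1))
      ∧ |cm 3| ≤ 500*(B*Real.sqrt (semiSq d e cm cp 1))
      ∧ |cp 1| ≤ 500*(B*Real.sqrt (semiSq d e cm cp 1))
      ∧ |cp 2| ≤ 500*(B*Real.sqrt (semiSq d e cm cp 1)) := by
    rcases le_total (1/2:ℝ) d with hdh | hdh
    · have hQ : (cm 1^2 + cm 2^2 + cm 3^2)/10000 ≤ semiSq d e cm cp 1 := by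
        calc (cm 1^2 + cm 2^2 + cm 3^2)/10000
            ≤ (∫ y in (0:ℝ)..1, ∫ x in (0:ℝ)..((1-y)/2), (cm 1 + 2*cm 3*x)^2)
              + ∫ y in (0:ℝ)..1, ∫ x in (0:ℝ)..((1-y)/2), (cm 2 - 2*cm 3*y)^2 :=
            tri1m_lb cm
          _ ≤ intTm d e (fun x y => (cm 1 + 2*cm 3*x)^2)
              + intTm d e (fun x y => (cm 2 - 2*cm 3*y)^2) := by
            have q1 := intTm_ge_tri d e hdh hd1.le hIcce
              (fun x y => (cm 1 + 2*cm 3*x)^2) (by fun_prop) (fun x y => sq_nonneg _)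
            have q2 := intTm_ge_tri d e hdh hd1.le hIcce
              (fun x y => (cm 2 - 2*cm 3*y)^2) (by fun_prop) (fun x y => sq_nonneg _)
            linarith only [q1, q2]
          _ ≤ _ := by rw [hS1eq]; linarith only [hT1a, hT1b, hT1c, hT1d]
      have hm1 : |cm 1| ≤ 100*Real.sqrt (semiSq d e cm cp 1) := by
        apply abs_le_K_sqrt 100 hS1nn (by norm_num)
        nlinarith only [hQ, sq_nonneg (cm 2), sq_nonneg (cm 3)]
      have hm2 : |cm 2| ≤ 100*Real.sqrt (semiSq d e cm cp 1) := by
        apply abs_le_K_sqrt 100 hS1nn (by norm_num)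
        nlinarith only [hQ, sq_nonneg (cm 1), sq_nonneg (cm 3)]
      have hm3 : |cm 3| ≤ 100*Real.sqrt (semiSq d e cm cp 1) := by
        apply abs_le_K_sqrt 100 hS1nn (by norm_num)
        nlinarith only [hQ, sq_nonneg (cm 1), sq_nonneg (cm 2)]
      have hdel : |cp 1 - cm 1| ≤ 400*(B*Real.sqrt (semiSq d e cm cp 1)) := by
        have h6 : |cp 1 - cm 1| ≤ (|βp - βm|/βp)*(400*Real.sqrt (semiSq d e cm cp 1)) := by
          rw [div_mul_eq_mul_div, le_div_iff₀ hβp]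
          calc |cp 1 - cm 1| * βp ≤ |βp - βm| * (|cm 1| + |cm 2| + 2*|cm 3|) := hdabs_p
            _ ≤ |βp - βm| * (400*Real.sqrt (semiSq d e cm cp 1)) :=
                mul_le_mul_of_nonneg_left (by linarith only [hm1, hm2, hm3]) (abs_nonneg _)
        calc |cp 1 - cm 1| ≤ (|βp - βm|/βp)*(400*Real.sqrt (semiSq d e cm cp 1)) := h6
          _ ≤ B*(400*Real.sqrt (semiSq d e cm cp 1)) :=
              mul_le_mul_of_nonneg_right hBp (by positivity)
          _ = 400*(B*Real.sqrt (semiSq d e cm cp 1)) := by ring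
      have hp1 : |cp 1| ≤ 500*(B*Real.sqrt (semiSq d e cm cp 1)) := by
        have h8 := abs_add_le (cm 1) (cp 1 - cm 1)
        rw [show cm 1 + (cp 1 - cm 1) = cp 1 from by ring] at h8
        nlinarith only [h8, hm1, hdel, hs0nn, hs1nn, mul_nonneg (show (0:ℝ) ≤ B - 1 by linarith only [hB1]) hs1nn]
      have hp2 : |cp 2| ≤ 500*(B*Real.sqrt (semiSq d e cm cp 1)) := by
        have h7 : |cp 2| ≤ |cm 2| + |cp 1 - cm 1| := by
          rw [hb2]
          refine (abs_add_le _ _).trans ?_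
          rw [abs_mul]
          nlinarith only [abs_nonneg (cp 1 - cm 1), abs_nonneg (d-e), hw]
        nlinarith only [h7, hm2, hdel, hs1nn, mul_nonneg (show (0:ℝ) ≤ B - 1 by linarith only [hB1]) hs1nn]
      refine ⟨?_, ?_, ?_, hp1, hp2⟩ <;>
        nlinarith only [hm1, hm2, hm3, hs1nn, mul_nonneg (show (0:ℝ) ≤ B - 1 by linarith only [hB1]) hs1nn]
    · have hQ : (cp 1^2 + cp 2^2 + cp 3^2)/10000 ≤ semiSq d e cm cp 1 := by
        calc (cp 1^2 + cp 2^2 + cp 3^2)/10000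
            ≤ (∫ y in (0:ℝ)..1, ∫ x in ((1+y)/2)..(1:ℝ), (cp 1 + 2*cp 3*x)^2)
              + ∫ y in (0:ℝ)..1, ∫ x in ((1+y)/2)..(1:ℝ), (cp 2 - 2*cp 3*y)^2 :=
            tri1p_lb cp
          _ ≤ intTp d e (fun x y => (cp 1 + 2*cp 3*x)^2)
              + intTp d e (fun x y => (cp 2 - 2*cp 3*y)^2) := by
            have q1 := intTp_ge_tri d e hd0.le hdh hIcce
              (fun x y => (cp 1 + 2*cp 3*x)^2) (by fun_prop) (fun x y => sq_nonneg _)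
            have q2 := intTp_ge_tri d e hd0.le hdh hIcce
              (fun x y => (cp 2 - 2*cp 3*y)^2) (by fun_prop) (fun x y => sq_nonneg _)
            linarith only [q1, q2]
          _ ≤ _ := by rw [hS1eq]; linarith only [hT1a, hT1b, hT1c, hT1d]
      have hp1 : |cp 1| ≤ 100*Real.sqrt (semiSq d e cm cp 1) := by
        apply abs_le_K_sqrt 100 hS1nn (by norm_num)
        nlinarith only [hQ, sq_nonneg (cp 2), sq_nonneg (cp 3)]
      have hp2 : |cp 2| ≤ 100*Real.sqrt (semiSq d e cm cp 1) := by
        apply abs_le_K_sqrt 100 hS1nn (by norm_num)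
        nlinarith only [hQ, sq_nonneg (cp 1), sq_nonneg (cp 3)]
      have hp3 : |cp 3| ≤ 100*Real.sqrt (semiSq d e cm cp 1) := by
        apply abs_le_K_sqrt 100 hS1nn (by norm_num)
        nlinarith only [hQ, sq_nonneg (cp 1), sq_nonneg (cp 2)]
      have hm3 : |cm 3| ≤ 100*Real.sqrt (semiSq d e cm cp 1) := by rw [h2']; exact hp3
      have hdel : |cp 1 - cm 1| ≤ 400*(B*Real.sqrt (semiSq d e cm cp 1)) := by
        have h6 : |cp 1 - cm 1| ≤ (|βp - βm|/βm)*(400*Real.sqrt (semiSq d e cm cp 1)) := by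
          rw [div_mul_eq_mul_div, le_div_iff₀ hβm]
          calc |cp 1 - cm 1| * βm ≤ |βp - βm| * (|cp 1| + |cp 2| + 2*|cp 3|) := hdabs_m
            _ ≤ |βp - βm| * (400*Real.sqrt (semiSq d e cm cp 1)) :=
                mul_le_mul_of_nonneg_left (by linarith only [hp1, hp2, hp3]) (abs_nonneg _)
        calc |cp 1 - cm 1| ≤ (|βp - βm|/βm)*(400*Real.sqrt (semiSq d e cm cp 1)) := h6
          _ ≤ B*(400*Real.sqrt (semiSq d e cm cp 1)) :=
              mul_le_mul_of_nonneg_right hBm (by positivity)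
          _ = 400*(B*Real.sqrt (semiSq d e cm cp 1)) := by ring
      have hm1 : |cm 1| ≤ 500*(B*Real.sqrt (semiSq d e cm cp 1)) := by
        have h8 : |cm 1| ≤ |cp 1| + |cp 1 - cm 1| := by
          have t := abs_sub_abs_le_abs_sub (cm 1) (cp 1)
          rw [abs_sub_comm] at t
          linarith only [t]
        nlinarith only [h8, hp1, hdel, hs0nn, hs1nn, mul_nonneg (show (0:ℝ) ≤ B - 1 by linarith only [hB1]) hs1nn]
      have hm2 : |cm 2| ≤ 500*(B*Real.sqrt (semiSq d e cm cp 1)) := by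
        have hb2' : cm 2 = cp 2 - (cp 1 - cm 1)*(d-e) := by linear_combination -hb2
        have h7 : |cm 2| ≤ |cp 2| + |cp 1 - cm 1| := by
          rw [hb2', sub_eq_add_neg]
          refine (abs_add_le _ _).trans ?_
          rw [abs_neg, abs_mul]
          nlinarith only [abs_nonneg (cp 1 - cm 1), abs_nonneg (d-e), hw]
        nlinarith only [h7, hp2, hdel, hs1nn, mul_nonneg (show (0:ℝ) ≤ B - 1 by linarith only [hB1]) hs1nn]
      refine ⟨hm1, hm2, ?_, ?_, ?_⟩ <;>
        nlinarith only [hm3, hp1, hp2, hp3, hs1nn, mul_nonneg (show (0:ℝ) ≤ B - 1 by linarith only [hB1]) hs1nn]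
  -- KEY 2
  have key2m : |cm 3| ≤ Real.sqrt (semiSq d e cm cp 2) := by
    have h9 : cm 3^2 ≤ 1^2*(semiSq d e cm cp 2) := by
      rw [hS2eq]; nlinarith only [sq_nonneg (cm 3)]
    simpa using abs_le_K_sqrt 1 hS2nn (by norm_num) h9
  have key2p : |cp 3| ≤ Real.sqrt (semiSq d e cm cp 2) := by rw [← h2']; exact key2m
  obtain ⟨k00, k01, k02, k03, k04, k05, k06⟩ := key0
  obtain ⟨k11, k12, k13, k14, k15⟩ := key1
  have k16 : |cp 3| ≤ 500*(B*Real.sqrt (semiSq d e cm cp 1)) := by rw [← h2']; exact k13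
  have k07 : |cp 3| ≤ 500*(B*Real.sqrt (semiSq d e cm cp 0)) := by rw [← h2']; exact k03
  constructor
  · -- part (i) : sup bounds
    intro k a b hab hk x hx y hy
    have hxa : |x| ≤ 1 := abs_le.mpr ⟨by linarith only [hx.1], hx.2⟩
    have hya : |y| ≤ 1 := abs_le.mpr ⟨by linarith only [hy.1], hy.2⟩
    have hsplit6 : (a=0∧b=0∧k=0)∨(a=1∧b=0∧k=1)∨(a=0∧b=1∧k=1)
        ∨(a=2∧b=0∧k=2)∨(a=1∧b=1∧k=2)∨(a=0∧b=2∧k=2) := by omega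
    have habs2x : ∀ u : Fin 4 → ℝ, |2*u 3*x| ≤ 2*|u 3| := by
      intro u
      rw [abs_mul, abs_mul, abs_two]
      nlinarith only [hxa, abs_nonneg (u 3), abs_nonneg x]
    have habs2y : ∀ u : Fin 4 → ℝ, |2*u 3*y| ≤ 2*|u 3| := by
      intro u
      rw [abs_mul, abs_mul, abs_two]
      nlinarith only [hya, abs_nonneg (u 3), abs_nonneg y]
    rcases hsplit6 with ⟨ha,hb,hk'⟩|⟨ha,hb,hk'⟩|⟨ha,hb,hk'⟩|⟨ha,hb,hk'⟩|⟨ha,hb,hk'⟩|⟨ha,hb,hk'⟩ <;>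
        subst ha <;> subst hb <;> subst hk' <;> constructor <;> intro _ <;>
        simp only [rq1D]
    · refine (rq1_abs_le cm hx hy).trans ?_; linarith only [k00, k01, k02, k03, hBs0]
    · refine (rq1_abs_le cp hx hy).trans ?_; linarith only [k04, k05, k06, k07, hBs0]
    · refine ((abs_add_le (cm 1) (2*cm 3*x)).trans ?_)
      linarith only [habs2x cm, k11, k13, hBs1]
    · refine ((abs_add_le (cp 1) (2*cp 3*x)).trans ?_)
      linarith only [habs2x cp, k14, k16, hBs1]
    · rw [sub_eq_add_neg]
      refine ((abs_add_le (cm 2) (-(2*cm 3*y))).trans ?_)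
      rw [abs_neg]
      linarith only [habs2y cm, k12, k13, hBs1]
    · rw [sub_eq_add_neg]
      refine ((abs_add_le (cp 2) (-(2*cp 3*y))).trans ?_)
      rw [abs_neg]
      linarith only [habs2y cp, k15, k16, hBs1]
    · rw [abs_mul, abs_two]
      linarith only [key2m, mul_nonneg (show (0:ℝ) ≤ 10000*B-2 by linarith only [hB1]) hs2nn]
    · rw [abs_mul, abs_two]
      linarith only [key2p, mul_nonneg (show (0:ℝ) ≤ 10000*B-2 by linarith only [hB1]) hs2nn]
    · rw [abs_zero]; positivity
    · rw [abs_zero]; positivity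
    · rw [abs_neg, abs_mul, abs_two]
      linarith only [key2m, mul_nonneg (show (0:ℝ) ≤ 10000*B-2 by linarith only [hB1]) hs2nn]
    · rw [abs_neg, abs_mul, abs_two]
      linarith only [key2p, mul_nonneg (show (0:ℝ) ≤ 10000*B-2 by linarith only [hB1]) hs2nn]
  · -- part (ii) : seminorm comparisons
    intro l k hlk hk2
    have hsplit : (l = k) ∨ (l=0∧k=1) ∨ (l=0∧k=2) ∨ (l=1∧k=2) := by omega
    rcases hsplit with h|⟨hl,hk⟩|⟨hl,hk⟩|⟨hl,hk⟩
    · subst h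
      linarith only [mul_nonneg (show (0:ℝ) ≤ 10000*B - 1 by linarith only [hB1])
        (Real.sqrt_nonneg (semiSq d e cm cp l))]
    · subst hl; subst hk
      apply sqrt_le_of_le_sq (by positivity)
      have hub : semiSq d e cm cp 1
          ≤ (|cm 1| + 2*|cm 3|)^2 + (|cp 1| + 2*|cp 3|)^2
            + (|cm 2| + 2*|cm 3|)^2 + (|cp 2| + 2*|cp 3|)^2 := by
        have u1 : intTm d e (fun x y => (cm 1 + 2*cm 3*x)^2) ≤ (|cm 1| + 2*|cm 3|)^2 := by
          apply intTm_le d e _ hIccd hIcce _ (by fun_prop) (by positivity)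
          intro x hx y hy
          have hxa : |x| ≤ 1 := abs_le.mpr ⟨by linarith only [hx.1], hx.2⟩
          have h9 : |cm 1 + 2*cm 3*x| ≤ |cm 1| + 2*|cm 3| := by
            refine (abs_add_le _ _).trans ?_
            rw [abs_mul, abs_mul, abs_two]
            nlinarith only [hxa, abs_nonneg (cm 3), abs_nonneg x]
          calc (cm 1 + 2*cm 3*x)^2 = |cm 1 + 2*cm 3*x|^2 := (sq_abs _).symm
            _ ≤ (|cm 1| + 2*|cm 3|)^2 := by
                exact pow_le_pow_left₀ (abs_nonneg _) h9 2
        have u2 : intTp d e (fun x y => (cp 1 + 2*cp 3*x)^2) ≤ (|cp 1| + 2*|cp 3|)^2 := by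
          apply intTp_le d e _ hIccd hIcce _ (by fun_prop) (by positivity)
          intro x hx y hy
          have hxa : |x| ≤ 1 := abs_le.mpr ⟨by linarith only [hx.1], hx.2⟩
          have h9 : |cp 1 + 2*cp 3*x| ≤ |cp 1| + 2*|cp 3| := by
            refine (abs_add_le _ _).trans ?_
            rw [abs_mul, abs_mul, abs_two]
            nlinarith only [hxa, abs_nonneg (cp 3), abs_nonneg x]
          calc (cp 1 + 2*cp 3*x)^2 = |cp 1 + 2*cp 3*x|^2 := (sq_abs _).symm
            _ ≤ (|cp 1| + 2*|cp 3|)^2 := by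
                exact pow_le_pow_left₀ (abs_nonneg _) h9 2
        have u3 : intTm d e (fun x y => (cm 2 - 2*cm 3*y)^2) ≤ (|cm 2| + 2*|cm 3|)^2 := by
          apply intTm_le d e _ hIccd hIcce _ (by fun_prop) (by positivity)
          intro x hx y hy
          have hya : |y| ≤ 1 := abs_le.mpr ⟨by linarith only [hy.1], hy.2⟩
          have h9 : |cm 2 - 2*cm 3*y| ≤ |cm 2| + 2*|cm 3| := by
            rw [sub_eq_add_neg]
            refine (abs_add_le _ _).trans ?_
            rw [abs_neg, abs_mul, abs_mul, abs_two]
            nlinarith only [hya, abs_nonneg (cm 3), abs_nonneg y]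
          calc (cm 2 - 2*cm 3*y)^2 = |cm 2 - 2*cm 3*y|^2 := (sq_abs _).symm
            _ ≤ (|cm 2| + 2*|cm 3|)^2 := by
                exact pow_le_pow_left₀ (abs_nonneg _) h9 2
        have u4 : intTp d e (fun x y => (cp 2 - 2*cp 3*y)^2) ≤ (|cp 2| + 2*|cp 3|)^2 := by
          apply intTp_le d e _ hIccd hIcce _ (by fun_prop) (by positivity)
          intro x hx y hy
          have hya : |y| ≤ 1 := abs_le.mpr ⟨by linarith only [hy.1], hy.2⟩
          have h9 : |cp 2 - 2*cp 3*y| ≤ |cp 2| + 2*|cp 3| := by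
            rw [sub_eq_add_neg]
            refine (abs_add_le _ _).trans ?_
            rw [abs_neg, abs_mul, abs_mul, abs_two]
            nlinarith only [hya, abs_nonneg (cp 3), abs_nonneg y]
          calc (cp 2 - 2*cp 3*y)^2 = |cp 2 - 2*cp 3*y|^2 := (sq_abs _).symm
            _ ≤ (|cp 2| + 2*|cp 3|)^2 := by
                exact pow_le_pow_left₀ (abs_nonneg _) h9 2
        rw [hS1eq]; linarith only [u1, u2, u3, u4]
      have m1 : |cm 1| + 2*|cm 3| ≤ 1500*(B*Real.sqrt (semiSq d e cm cp 0)) := by linarith only [k01, k03]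
      have m2 : |cp 1| + 2*|cp 3| ≤ 1500*(B*Real.sqrt (semiSq d e cm cp 0)) := by linarith only [k05, k07]
      have m3 : |cm 2| + 2*|cm 3| ≤ 1500*(B*Real.sqrt (semiSq d e cm cp 0)) := by linarith only [k02, k03]
      have m4 : |cp 2| + 2*|cp 3| ≤ 1500*(B*Real.sqrt (semiSq d e cm cp 0)) := by linarith only [k06, k07]
      have sq1 := pow_le_pow_left₀ (by positivity : (0:ℝ) ≤ |cm 1| + 2*|cm 3|) m1 2
      have sq2 := pow_le_pow_left₀ (by positivity : (0:ℝ) ≤ |cp 1| + 2*|cp 3|) m2 2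
      have sq3 := pow_le_pow_left₀ (by positivity : (0:ℝ) ≤ |cm 2| + 2*|cm 3|) m3 2
      have sq4 := pow_le_pow_left₀ (by positivity : (0:ℝ) ≤ |cp 2| + 2*|cp 3|) m4 2
      nlinarith only [hub, sq1, sq2, sq3, sq4, sq_nonneg (B*Real.sqrt (semiSq d e cm cp 0))]
    · subst hl; subst hk
      apply sqrt_le_of_le_sq (by positivity)
      rw [hS2eq]
      have sq1 := pow_le_pow_left₀ (abs_nonneg (cm 3)) k03 2
      nlinarith only [sq1, sq_abs (cm 3), sq_nonneg (B*Real.sqrt (semiSq d e cm cp 0))]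
    · subst hl; subst hk
      apply sqrt_le_of_le_sq (by positivity)
      rw [hS2eq]
      have sq1 := pow_le_pow_left₀ (abs_nonneg (cm 3)) k13 2
      nlinarith only [sq1, sq_abs (cm 3), sq_nonneg (B*Real.sqrt (semiSq d e cm cp 1))]

end
end

section
/- The rotated-Q1 IFE coefficient system is a nonsingular linear system: for every β⁻, β⁺ > 0 and d, e ∈ (0,1), the linear map from ℝ⁸ to ℝ⁸ sending the combined coefficient vector (c⁻, c⁺) ∈ ℝ⁴ × ℝ⁴ to the 8-tuple consisting of (i) the four edge-mean degrees of freedom of the associated piecewise rotated-Q1 function φ, (ii) the two point-continuity defects p⁺(D) − p⁻(D) and p⁺(E) − p⁻(E), (iii) the coefficient defect c₄⁺ − c₄⁻, and (iv) the flux defect ∫₀¹ (β⁺∇p⁺ − β⁻∇p⁻)((1−t)d + t e, t) · (1, d − e) dt, is a linear bijection of ℝ⁸ (equivalently, the 8×8 coefficient matrix M_c of the system is nonsingular). -/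
open MeasureTheory Set

noncomputable section

lemma int_poly (p q r a b : ℝ) :
    (∫ x in a..b, (p + q * x + r * x ^ 2)) =
      p * (b - a) + q * (b ^ 2 - a ^ 2) / 2 + r * (b ^ 3 - a ^ 3) / 3 := by
  have h : ∀ x ∈ Set.uIcc a b,
      HasDerivAt (fun u : ℝ => p * u + (q / 2 * u ^ 2 + r / 3 * u ^ 3))
        (p + q * x + r * x ^ 2) x := by
    intro x _
    have H := ((hasDerivAt_id x).const_mul p).add
      (((hasDerivAt_pow 2 x).const_mul (q / 2)).add ((hasDerivAt_pow 3 x).const_mul (r / 3)))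
    exact H.congr_deriv (by push_cast; ring)
  rw [intervalIntegral.integral_eq_sub_of_hasDerivAt h
    ((Continuous.intervalIntegrable (by continuity) a b))]
  ring

lemma int_rq1_x (c : Fin 4 → ℝ) (y0 a b : ℝ) :
    (∫ x in a..b, rq1 c x y0) =
      (c 0 + c 2 * y0 - c 3 * y0 ^ 2) * (b - a) + c 1 * (b ^ 2 - a ^ 2) / 2
        + c 3 * (b ^ 3 - a ^ 3) / 3 := by
  have h : (fun x => rq1 c x y0)
      = fun x => (c 0 + c 2 * y0 - c 3 * y0 ^ 2) + c 1 * x + c 3 * x ^ 2 := by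
    funext x; simp only [rq1]; ring
  rw [h, int_poly]

lemma int_rq1_y (c : Fin 4 → ℝ) (x0 a b : ℝ) :
    (∫ y in a..b, rq1 c x0 y) =
      (c 0 + c 1 * x0 + c 3 * x0 ^ 2) * (b - a) + c 2 * (b ^ 2 - a ^ 2) / 2
        + (-(c 3)) * (b ^ 3 - a ^ 3) / 3 := by
  have h : (fun y => rq1 c x0 y)
      = fun y => (c 0 + c 1 * x0 + c 3 * x0 ^ 2) + c 2 * y + (-(c 3)) * y ^ 2 := by
    funext y; simp only [rq1]; ring
  rw [h, int_poly]

lemma fluxDefect_eq (βm βp d e : ℝ) (cm cp : Fin 4 → ℝ) :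
    fluxDefect βm βp d e cm cp =
      (βp * cp 1 - βm * cm 1) + (d + e) * (βp * cp 3 - βm * cm 3)
        + (d - e) * (βp * cp 2 - βm * cm 2) - (d - e) * (βp * cp 3 - βm * cm 3) := by
  have h : (fun t : ℝ =>
      ((βp * (cp 1 + 2 * cp 3 * ((1 - t) * d + t * e))
          - βm * (cm 1 + 2 * cm 3 * ((1 - t) * d + t * e))) * 1
        + (βp * (cp 2 - 2 * cp 3 * t) - βm * (cm 2 - 2 * cm 3 * t)) * (d - e)))
      = fun t : ℝ =>
        ((βp * cp 1 - βm * cm 1) + 2 * d * (βp * cp 3 - βm * cm 3)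
            + (d - e) * (βp * cp 2 - βm * cm 2))
          + ((2 * (e - d) - 2 * (d - e)) * (βp * cp 3 - βm * cm 3)) * t
          + 0 * t ^ 2 := by
    funext t; ring
  rw [fluxDefect, h, int_poly]; ring

lemma S4_pos {d e : ℝ} (hd0 : 0 < d) (hd1 : d < 1) (he0 : 0 < e) (he1 : e < 1) :
    0 < 3*((1-d)*d+(1-e)*e)*(d+e-1) + 2*(2-d-e)*(1+(d-e)^2) := by
  nlinarith [mul_pos hd0 he0, mul_pos (sub_pos.mpr hd1) (sub_pos.mpr he1),
    sq_nonneg (d-e), sq_nonneg (d+e-1), mul_pos hd0 (sub_pos.mpr hd1),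
    mul_pos he0 (sub_pos.mpr he1),
    mul_pos (mul_pos hd0 (sub_pos.mpr hd1)) (sub_pos.mpr he1),
    mul_pos (mul_pos he0 (sub_pos.mpr he1)) (sub_pos.mpr hd1)]


set_option maxHeartbeats 1000000 in
/-- Auxiliary: the evaluated (polynomial) form of the IFE coefficient map,
packaged as a linear map. -/
def ifeL (βm βp d e : ℝ) : ((Fin 4 → ℝ) × (Fin 4 → ℝ)) →ₗ[ℝ] (Fin 8 → ℝ) where
  toFun c :=
    ![c.1 0 * d + c.1 1 * (d ^ 2 - 0) / 2 + c.1 3 * (d ^ 3 - 0) / 3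
        + (c.2 0 * (1 - d) + c.2 1 * (1 - d ^ 2) / 2 + c.2 3 * (1 - d ^ 3) / 3),
      c.2 0 + c.2 1 + c.2 3 + c.2 2 / 2 - c.2 3 / 3,
      (c.1 0 + c.1 2 - c.1 3) * e + c.1 1 * (e ^ 2 - 0) / 2 + c.1 3 * (e ^ 3 - 0) / 3
        + ((c.2 0 + c.2 2 - c.2 3) * (1 - e) + c.2 1 * (1 - e ^ 2) / 2
            + c.2 3 * (1 - e ^ 3) / 3),
      c.1 0 + c.1 2 / 2 - c.1 3 / 3,
      (c.2 0 + c.2 1 * d + c.2 3 * d ^ 2) - (c.1 0 + c.1 1 * d + c.1 3 * d ^ 2),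
      (c.2 0 + c.2 1 * e + c.2 2 + c.2 3 * (e ^ 2 - 1))
        - (c.1 0 + c.1 1 * e + c.1 2 + c.1 3 * (e ^ 2 - 1)),
      c.2 3 - c.1 3,
      (βp * c.2 1 - βm * c.1 1) + (d + e) * (βp * c.2 3 - βm * c.1 3)
        + (d - e) * (βp * c.2 2 - βm * c.1 2) - (d - e) * (βp * c.2 3 - βm * c.1 3)]
  map_add' u v := by
    simp only [Prod.fst_add, Prod.snd_add, Pi.add_apply]
    rw [Matrix.cons_add_cons, Matrix.cons_add_cons, Matrix.cons_add_cons,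
      Matrix.cons_add_cons, Matrix.cons_add_cons, Matrix.cons_add_cons,
      Matrix.cons_add_cons, Matrix.cons_add_cons, Matrix.empty_add_empty]
    simp only [Matrix.vecCons, Fin.cons_inj]
    repeat' apply And.intro
    all_goals first | trivial | ring
  map_smul' r u := by
    simp only [Prod.smul_fst, Prod.smul_snd, Pi.smul_apply, smul_eq_mul, RingHom.id_apply]
    rw [Matrix.smul_cons, Matrix.smul_cons, Matrix.smul_cons, Matrix.smul_cons,
      Matrix.smul_cons, Matrix.smul_cons, Matrix.smul_cons, Matrix.smul_cons,
      Matrix.smul_empty]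
    simp only [Matrix.vecCons, Fin.cons_inj, smul_eq_mul]
    repeat' apply And.intro
    all_goals first | trivial | ring

set_option maxHeartbeats 1000000 in
/-- The rotated-Q1 IFE coefficient system is nonsingular: the linear
map sending `(c⁻, c⁺) ∈ ℝ⁴ × ℝ⁴` to the four edge-mean degrees of freedom, the two
point-continuity defects at `D` and `E`, the coefficient defect `c₄⁺ − c₄⁻`, and the
flux defect, is a linear bijection of ℝ⁸. -/
theorem ife_system_nonsingular
    (βm βp : ℝ) (hβm : 0 < βm) (hβp : 0 < βp)
    (d e : ℝ) (hd : d ∈ Ioo (0:ℝ) 1) (he : e ∈ Ioo (0:ℝ) 1) :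
    Function.Bijective (fun c : (Fin 4 → ℝ) × (Fin 4 → ℝ) =>
      (![dofI d e c.1 c.2 0, dofI d e c.1 c.2 1,
         dofI d e c.1 c.2 2, dofI d e c.1 c.2 3,
         rq1 c.2 d 0 - rq1 c.1 d 0, rq1 c.2 e 1 - rq1 c.1 e 1,
         c.2 3 - c.1 3, fluxDefect βm βp d e c.1 c.2] : Fin 8 → ℝ)) := by
  obtain ⟨hd0, hd1⟩ := hd
  obtain ⟨he0, he1⟩ := he
  have hfun : (fun c : (Fin 4 → ℝ) × (Fin 4 → ℝ) =>
      (![dofI d e c.1 c.2 0, dofI d e c.1 c.2 1,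
         dofI d e c.1 c.2 2, dofI d e c.1 c.2 3,
         rq1 c.2 d 0 - rq1 c.1 d 0, rq1 c.2 e 1 - rq1 c.1 e 1,
         c.2 3 - c.1 3, fluxDefect βm βp d e c.1 c.2] : Fin 8 → ℝ))
      = ⇑(ifeL βm βp d e) := by
    funext c
    simp only [dofI, Matrix.cons_val_zero, Matrix.cons_val_one, Matrix.head_cons,
      Matrix.cons_val_two, Matrix.cons_val_three, Matrix.tail_cons, ifeL,
      LinearMap.coe_mk, AddHom.coe_mk]
    simp only [Matrix.vecCons, Fin.cons_inj]
    repeat' apply And.intro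
    all_goals first
      | trivial
      | (rw [int_rq1_x, int_rq1_x]; ring)
      | (rw [int_rq1_y]; ring)
      | (rw [fluxDefect_eq])
      | (simp only [rq1]; ring)
  rw [hfun]
  have hker : ∀ u : (Fin 4 → ℝ) × (Fin 4 → ℝ), ifeL βm βp d e u = 0 → u = 0 := by
    rintro ⟨cm, cp⟩ hc
    rw [show (0 : Fin 8 → ℝ) = ![0,0,0,0,0,0,0,0] from by funext i; fin_cases i <;> rfl] at hc
    simp only [ifeL, LinearMap.coe_mk, AddHom.coe_mk, Matrix.vecCons,
      Fin.cons_inj] at hc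
    obtain ⟨h0, h1, h2, h3, h4, h5, h6, h7, -⟩ := hc
    have hu : cp 0 - cm 0 - (cm 1 - cp 1) * d = 0 := by
      linear_combination h4 - d ^ 2 * h6
    have hv : cp 2 - cm 2 + (cm 1 - cp 1) * (d - e) = 0 := by
      linear_combination h5 - (e ^ 2 - 1) * h6 - hu
    have e1 : cm 0 + cm 1 / 2 + cm 3 / 3 - (cm 1 - cp 1) * (1 - d) ^ 2 / 2 = 0 := by
      linear_combination h0 - (1 - d) * hu - ((1 - d ^ 3) / 3) * h6
    have e2 : cm 0 + cm 1 + cm 2 / 2 + 2 * cm 3 / 3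
        + (cm 1 - cp 1) * (d + e - 2) / 2 = 0 := by
      linear_combination h1 - hu - hv / 2 - (2 / 3 : ℝ) * h6
    have e3 : cm 0 + cm 1 / 2 + cm 2 - 2 * cm 3 / 3
        - (cm 1 - cp 1) * (1 - e) ^ 2 / 2 = 0 := by
      linear_combination h2 - (1 - e) * hu - (1 - e) * hv - (-(1 - e) + (1 - e ^ 3) / 3) * h6
    have peq : cm 1 + cm 3 + (cm 1 - cp 1) * (d + e - 2) / 2 = 0 := by
      linear_combination e2 - h3
    have qeq : cm 2 - cm 3 - (cm 1 - cp 1) * ((1 - e) ^ 2 - (1 - d) ^ 2) / 2 = 0 := by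
      linear_combination e3 - e1
    have feq : -(2 * cm 3) / 3
        + (cm 1 - cp 1) * ((2 - d - e) - (1 - d) ^ 2 - (1 - e) ^ 2) / 2 = 0 := by
      linear_combination e3 + e1 - e2 - h3
    have hK : (cm 1 - cp 1) *
        (βp * ((3 * ((1 - d) * d + (1 - e) * e) * (d + e - 1)
            + 2 * (2 - d - e) * (1 + (d - e) ^ 2)) - 4 * (1 + (d - e) ^ 2))
          - βm * (3 * ((1 - d) * d + (1 - e) * e) * (d + e - 1)
            + 2 * (2 - d - e) * (1 + (d - e) ^ 2))) = 0 := by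
      linear_combination 4 * h7 - 4 * βp * (d - e) * hv - 2 * e * βp * 4 * h6
        - 4 * (βp - βm) * peq - 4 * (βp - βm) * (d - e) * qeq
        + 6 * (d + e - 1) * (βp - βm) * feq
    have hS : 0 < 3 * ((1 - d) * d + (1 - e) * e) * (d + e - 1)
        + 2 * (2 - d - e) * (1 + (d - e) ^ 2) := S4_pos hd0 hd1 he0 he1
    have hS' := S4_pos (d := 1 - d) (e := 1 - e) (by linarith) (by linarith)
      (by linarith) (by linarith)
    have hX : (3 * ((1 - d) * d + (1 - e) * e) * (d + e - 1)
        + 2 * (2 - d - e) * (1 + (d - e) ^ 2)) - 4 * (1 + (d - e) ^ 2) < 0 := by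
      linarith [hS']
    have hw : cm 1 - cp 1 = 0 := by
      rcases mul_eq_zero.mp hK with h | h
      · exact h
      · exfalso
        nlinarith [mul_pos hβm hS, mul_pos hβp (neg_pos.mpr hX)]
    have hf : cm 3 = 0 := by
      linear_combination (-(3 : ℝ) / 2) * feq
        + ((3 : ℝ) / 4) * ((2 - d - e) - (1 - d) ^ 2 - (1 - e) ^ 2) * hw
    have hb : cm 1 = 0 := by
      linear_combination peq - hf - ((d + e - 2) / 2) * hw
    have hc2 : cm 2 = 0 := by
      linear_combination qeq + hf + (((1 - e) ^ 2 - (1 - d) ^ 2) / 2) * hw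
    have ha : cm 0 = 0 := by linear_combination h3 - hc2 / 2 + hf / 3
    have hcp1 : cp 1 = 0 := by linear_combination hb - hw
    have hcp3 : cp 3 = 0 := by linear_combination h6 + hf
    have hcp0 : cp 0 = 0 := by linear_combination hu + ha + d * hw
    have hcp2 : cp 2 = 0 := by linear_combination hv + hc2 - (d - e) * hw
    refine Prod.ext ?_ ?_ <;> funext i <;> fin_cases i <;>
      simp [ha, hb, hc2, hf, hcp0, hcp1, hcp2, hcp3]
  have hinj : Function.Injective (ifeL βm βp d e) :=
    LinearMap.ker_eq_bot.mp (LinearMap.ker_eq_bot'.mpr hker)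
  have hfr : Module.finrank ℝ ((Fin 4 → ℝ) × (Fin 4 → ℝ))
      = Module.finrank ℝ (Fin 8 → ℝ) := by simp
  exact ⟨hinj, (LinearMap.injective_iff_surjective_of_finrank_eq_finrank hfr).mp hinj⟩

end
end
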